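/- Let X ⊆ 𝒜^{ℤ^d} be a subshift, f ∈ SV_d(X), Λ ⊆ ℤ^d finite nonempty, ω ∈ 𝒜^Λ and x ∈ X. Then the limit lim_{n→∞} e^{f_n(ω x_{Λ^c})} 1{ω x_{Λ^c} ∈ X} / Σ_{η∈𝒜^Λ} e^{f_n(η x_{Λ^c})} 1{η x_{Λ^c} ∈ X} exists and is a nonnegative real number. It equals 0 when ω x_{Λ^c} ∉ X, and when ω x_{Λ^c} ∈ X it equals 1 / Σ_{η∈𝒜^Λ} e^{φ_f(ω x_{Λ^c}, η x_{Λ^c})} 1{η x_{Λ^c} ∈ X} > 0. -/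

import Mathlib

open MeasureTheory Filter Topology

/-- The full shift configuration space `𝒜^{ℤ^d}`. -/
abbrev Config (d : ℕ) (A : Type*) := (Fin d → ℤ) → A

/-- The shift action of `ℤ^d`: `(T^k x)_i = x_{i+k}`. -/
def shift {d : ℕ} {A : Type*} (k : Fin d → ℤ) (x : Config d A) : Config d A :=
  fun i => x (i + k)

/-- The ℓ∞ norm of a lattice point, `‖k‖_∞ = max_i |k_i|`. -/
def normInf {d : ℕ} (k : Fin d → ℤ) : ℕ :=
  Finset.univ.sup fun i => (k i).natAbs

/-- The box `Λ_N = {k : ‖k‖_∞ ≤ N}` as a finset. -/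
noncomputable def boxF (d N : ℕ) : Finset (Fin d → ℤ) :=
  Finset.Icc (fun _ => -(N : ℤ)) (fun _ => (N : ℤ))

/-- The `n`-th variation of `f` on a subshift `X`:
`δ_n(f) = sup {|f x - f y| : x, y ∈ X, x_{Λ_n} = y_{Λ_n}}`. -/
noncomputable def deltaVar {d : ℕ} {A : Type*} (X : Set (Config d A))
    (f : Config d A → ℝ) (n : ℕ) : ℝ :=
  sSup {r : ℝ | ∃ x ∈ X, ∃ y ∈ X,
    (∀ k : Fin d → ℤ, normInf k ≤ n → x k = y k) ∧ r = |f x - f y|}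

/-- `f` is bounded on `X`. -/
def BoundedOn {d : ℕ} {A : Type*} (X : Set (Config d A)) (f : Config d A → ℝ) : Prop :=
  ∃ C : ℝ, ∀ x ∈ X, |f x| ≤ C

/-- Membership in `SV_d(X)`: bounded with `Σ_{n ≥ 1} n^{d-1} δ_n(f) < ∞`. -/
def MemSV (d : ℕ) {A : Type*} (X : Set (Config d A)) (f : Config d A → ℝ) : Prop :=
  BoundedOn X f ∧ Summable fun n : ℕ => ((n : ℝ) + 1) ^ (d - 1) * deltaVar X f (n + 1)

/-- The sup norm of `f` over `X`. -/
noncomputable def supNormOn {d : ℕ} {A : Type*} (X : Set (Config d A))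
    (f : Config d A → ℝ) : ℝ :=
  sSup {r : ℝ | ∃ x ∈ X, r = |f x|}

/-- The `SV_d` norm: `‖f‖_{SV_d} = ‖f‖_∞ + Σ_{n ≥ 1} n^{d-1} δ_n(f)`. -/
noncomputable def svNorm (d : ℕ) {A : Type*} (X : Set (Config d A))
    (f : Config d A → ℝ) : ℝ :=
  supNormOn X f + ∑' n : ℕ, ((n : ℝ) + 1) ^ (d - 1) * deltaVar X f (n + 1)

/-- The Gibbs relation `𝔗`: pairs of points of `X` that agree outside a finite set. -/
def gibbsRel {d : ℕ} {A : Type*} (X : Set (Config d A)) :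
    Set (Config d A × Config d A) :=
  {p | p.1 ∈ X ∧ p.2 ∈ X ∧ ∃ Λ : Finset (Fin d → ℤ), ∀ k ∉ Λ, p.1 k = p.2 k}

/-- The cocycle `φ_f(x,y) = Σ_{k ∈ ℤ^d} (f(T^k y) - f(T^k x))` (unordered sum). -/
noncomputable def phiF {d : ℕ} {A : Type*} (f : Config d A → ℝ)
    (x y : Config d A) : ℝ :=
  ∑' k : Fin d → ℤ, (f (shift k y) - f (shift k x))

/-- Membership in `𝓕(X)`: homeomorphisms of `X` changing only finitely many coordinates,
uniformly. -/
def memF {d : ℕ} {A : Type*} [TopologicalSpace A] (X : Set (Config d A))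
    (φ : ↥X ≃ₜ ↥X) : Prop :=
  ∃ n : ℕ, 1 ≤ n ∧ ∀ x : ↥X, ∀ k : Fin d → ℤ, n < normInf k → (φ x).1 k = x.1 k

/-- `𝓕_n(X)`. -/
def Fn {d : ℕ} {A : Type*} [TopologicalSpace A] (X : Set (Config d A)) (n : ℕ) :
    Set (↥X ≃ₜ ↥X) :=
  {φ | (∀ x : ↥X, ∀ k : Fin d → ℤ, n < normInf k → (φ x).1 k = x.1 k) ∧
    ∀ x y : ↥X,
      ((∀ k : Fin d → ℤ, normInf k ≤ n → x.1 k = y.1 k) ↔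
        (∀ k : Fin d → ℤ, normInf k ≤ n → (φ x).1 k = (φ y).1 k))}

/-- The configuration `ω x_{Λ^c}`: equal to `ω` on `Λ` and to `x` off `Λ`. -/
def patch {d : ℕ} {A : Type*} (Λ : Finset (Fin d → ℤ)) (ω : {k // k ∈ Λ} → A)
    (x : Config d A) : Config d A :=
  fun k => if h : k ∈ Λ then ω ⟨k, h⟩ else x k

/-- `f_n = Σ_{i ∈ Λ_n} f ∘ T^i`. -/
noncomputable def fnSum (d : ℕ) {A : Type*} (f : Config d A → ℝ) (n : ℕ)
    (z : Config d A) : ℝ :=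
  ∑ i ∈ boxF d n, f (shift i z)

/-- The σ-algebra `𝓕_Δ` on `X`, generated by the coordinate projections `x ↦ x_i`, `i ∈ Δ`. -/
def cylSigma {d : ℕ} {A : Type*} [MeasurableSpace A] (X : Set (Config d A))
    (Δ : Set (Fin d → ℤ)) : MeasurableSpace ↥X :=
  MeasurableSpace.comap (fun (x : ↥X) (i : ↥Δ) => x.1 i.1) MeasurableSpace.pi

/-- `μ` is a Gibbs measure for `f`: `(φ_f, 𝔗)`-conformal. -/
def IsGibbs (d : ℕ) {A : Type*} [MeasurableSpace A] (X : Set (Config d A))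
    (f : Config d A → ℝ) (μ : Measure ↥X) : Prop :=
  ∀ V W : ↥X → ↥X, Measurable V → Measurable W →
    (∀ x, W (V x) = x) → (∀ x, V (W x) = x) →
    (∀ x : ↥X, ((x.1, (V x).1) ∈ gibbsRel X)) →
    (Measure.map V μ ≪ μ ∧
      ∀ᵐ x ∂μ, (Measure.map V μ).rnDeriv μ x
        = ENNReal.ofReal (Real.exp (phiF f x.1 (W x).1)))

/-- `μ` is a topological Gibbs measure for `f`: `(φ_f|_{𝔗⁰}, 𝔗⁰)`-conformal. -/
def IsTopGibbs (d : ℕ) {A : Type*} [TopologicalSpace A] [MeasurableSpace A]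
    (X : Set (Config d A)) (f : Config d A → ℝ) (μ : Measure ↥X) : Prop :=
  ∀ φ : ↥X ≃ₜ ↥X, memF X φ →
    (Measure.map (⇑φ) μ ≪ μ ∧
      ∀ᵐ x ∂μ, (Measure.map (⇑φ) μ).rnDeriv μ x
        = ENNReal.ofReal (Real.exp (phiF f x.1 (φ.symm x).1)))

/-- Finite-volume Gibbsian ratios defining the kernel `γ_Λ`. -/
noncomputable def gammaFn (d : ℕ) {A : Type*} [Fintype A] (X : Set (Config d A))
    (f : Config d A → ℝ) (Λ : Finset (Fin d → ℤ)) (S : Set ↥X) (x : Config d A)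
    (n : ℕ) : ℝ :=
  (∑ ω : {k // k ∈ Λ} → A,
      (Subtype.val '' S).indicator (fun z => Real.exp (fnSum d f n z)) (patch Λ ω x)) /
  (∑ η : {k // k ∈ Λ} → A,
      X.indicator (fun z => Real.exp (fnSum d f n z)) (patch Λ η x))

/-- The kernel `γ_Λ(S | x)`, defined as the limit of the finite-volume ratios. -/
noncomputable def gamma (d : ℕ) {A : Type*} [Fintype A] (X : Set (Config d A))
    (f : Config d A → ℝ) (Λ : Finset (Fin d → ℤ)) (S : Set ↥X) (x : Config d A) : ℝ :=
  limUnder atTop (gammaFn d X f Λ S x)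

/-- `X` is a subshift of finite type. -/
def IsSFT {d : ℕ} {A : Type*} (X : Set (Config d A)) : Prop :=
  ∃ n : ℕ, 1 ≤ n ∧ ∃ F : Set ({k : Fin d → ℤ // normInf k ≤ n} → A),
    X = {x : Config d A |
      ∀ l : Fin d → ℤ, (fun k : {k : Fin d → ℤ // normInf k ≤ n} => shift l x k.1) ∉ F}

/-- The topological Gibbs relation `𝔗⁰`. -/
def topGibbsRel {d : ℕ} {A : Type*} [TopologicalSpace A] (X : Set (Config d A)) :
    Set (Config d A × Config d A) :=
  {p | ∃ (hx : p.1 ∈ X) (φ : ↥X ≃ₜ ↥X), memF X φ ∧ (φ ⟨p.1, hx⟩).1 = p.2}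

/-- `f` is a local function on `X`. -/
def IsLocal {d : ℕ} {A : Type*} (X : Set (Config d A)) (f : Config d A → ℝ) : Prop :=
  ∃ Λ : Finset (Fin d → ℤ), ∀ x ∈ X, ∀ y ∈ X, (∀ k ∈ Λ, x k = y k) → f x = f y

lemma normInf_le_iff {d : ℕ} {k : Fin d → ℤ} {n : ℕ} :
    normInf k ≤ n ↔ ∀ i, (k i).natAbs ≤ n := by
  simp [normInf, Finset.sup_le_iff]

lemma mem_boxF {d N : ℕ} {k : Fin d → ℤ} : k ∈ boxF d N ↔ normInf k ≤ N := by
  rw [boxF, Finset.mem_Icc, normInf_le_iff]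
  constructor
  · rintro ⟨h1, h2⟩ i
    have a1 := h1 i; have a2 := h2 i; simp only at a1 a2; omega
  · intro h
    constructor <;> intro i <;> (have := h i; simp only at *; omega)

lemma boxF_mono {d : ℕ} : Monotone (boxF d) := by
  intro m n h
  intro k hk
  rw [mem_boxF] at *
  omega

lemma card_boxF {d : ℕ} (N : ℕ) : (boxF d N).card = (2*N+1)^d := by
  rw [boxF, Pi.card_Icc]
  have h : ((N:ℤ) + 1 - -(N:ℤ)).toNat = 2*N+1 := by omega
  simp only [Int.card_Icc]
  rw [show ((N:ℤ) + 1 - -(N:ℤ)).toNat = 2*N+1 by omega]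
  simp



section Delta
variable {d : ℕ} {A : Type*} {X : Set (Config d A)} {f : Config d A → ℝ} {C : ℝ} {n : ℕ}

lemma deltaSet_nonempty (hne : X.Nonempty) :
    {r : ℝ | ∃ x ∈ X, ∃ y ∈ X,
      (∀ k : Fin d → ℤ, normInf k ≤ n → x k = y k) ∧ r = |f x - f y|}.Nonempty := by
  obtain ⟨x, hx⟩ := hne
  exact ⟨0, x, hx, x, hx, fun _ _ => rfl, by simp⟩

lemma deltaSet_bddAbove (hC : ∀ x ∈ X, |f x| ≤ C) :
    BddAbove {r : ℝ | ∃ x ∈ X, ∃ y ∈ X,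
      (∀ k : Fin d → ℤ, normInf k ≤ n → x k = y k) ∧ r = |f x - f y|} := by
  refine ⟨2*C, ?_⟩
  rintro r ⟨x, hx, y, hy, -, rfl⟩
  calc |f x - f y| ≤ |f x| + |f y| := abs_sub _ _
    _ ≤ C + C := add_le_add (hC x hx) (hC y hy)
    _ = 2*C := by ring

lemma deltaVar_nonneg (hne : X.Nonempty) (hC : ∀ x ∈ X, |f x| ≤ C) :
    0 ≤ deltaVar X f n := by
  obtain ⟨x, hx⟩ := hne
  exact le_csSup (deltaSet_bddAbove hC) ⟨x, hx, x, hx, fun _ _ => rfl, by simp⟩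

lemma deltaVar_le_two_C (hne : X.Nonempty) (hC : ∀ x ∈ X, |f x| ≤ C) :
    deltaVar X f n ≤ 2*C := by
  refine csSup_le (deltaSet_nonempty hne) ?_
  rintro r ⟨x, hx, y, hy, -, rfl⟩
  calc |f x - f y| ≤ |f x| + |f y| := abs_sub _ _
    _ ≤ C + C := add_le_add (hC x hx) (hC y hy)
    _ = 2*C := by ring

lemma abs_sub_le_deltaVar (hC : ∀ x ∈ X, |f x| ≤ C) {x y : Config d A}
    (hx : x ∈ X) (hy : y ∈ X) (h : ∀ k : Fin d → ℤ, normInf k ≤ n → x k = y k) :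
    |f x - f y| ≤ deltaVar X f n :=
  le_csSup (deltaSet_bddAbove hC) ⟨x, hx, y, hy, h, rfl⟩

end Delta



/-- Cardinality of the sphere of radius `m` (for `m ≥ 1`; also correct for `m = 0` when `d ≥ 1`). -/
def sph (d m : ℕ) : ℕ := (2*m+1)^d - (2*m-1)^d

lemma sum_boxF_radial {d : ℕ} (hd : 1 ≤ d) (D : ℕ → ℝ) (M : ℕ) :
    ∑ v ∈ boxF d M, D (normInf v) = ∑ m ∈ Finset.range (M+1), (sph d m : ℝ) * D m := by
  induction M with
  | zero =>
    have h0 : boxF d 0 = {fun _ => (0:ℤ)} := by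
      norm_num [boxF, Finset.Icc_self]
    have h1 : sph d 0 = 1 := by
      rw [sph]
      rw [Nat.zero_pow (by omega : 0 < d)]
      norm_num
    have h2 : normInf (fun _ : Fin d => (0:ℤ)) = 0 := by simp [normInf]
    rw [h0, Finset.sum_singleton, h2]
    rw [Finset.sum_range_one, h1]
    norm_num
  | succ M ih =>
    have hsub : boxF d M ⊆ boxF d (M+1) := boxF_mono (Nat.le_succ M)
    have hval : ∀ v ∈ boxF d (M+1) \ boxF d M, D (normInf v) = D (M+1) := by
      intro v hv
      rw [Finset.mem_sdiff, mem_boxF, mem_boxF] at hv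
      congr 1
      omega
    have hann : ∑ v ∈ boxF d (M+1) \ boxF d M, D (normInf v) = (sph d (M+1) : ℝ) * D (M+1) := by
      rw [Finset.sum_congr rfl hval, Finset.sum_const, Finset.card_sdiff_of_subset hsub,
        card_boxF, card_boxF, nsmul_eq_mul]
      have h3 : 2*(M+1)-1 = 2*M+1 := by omega
      rw [sph, h3]
    rw [← Finset.sum_sdiff hsub, ih, hann, add_comm]
    exact (Finset.sum_range_succ _ _).symm

lemma summable_radial {d : ℕ} (hd : 1 ≤ d) {D : ℕ → ℝ} (hD0 : ∀ m, 0 ≤ D m)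
    (hDs : Summable fun m => (sph d m : ℝ) * D m) :
    Summable fun v : Fin d → ℤ => D (normInf v) := by
  apply summable_of_sum_le (fun v => hD0 _)
  intro u
  have hu : u ⊆ boxF d (u.sup normInf) := fun v hv => mem_boxF.2 (Finset.le_sup hv)
  calc ∑ v ∈ u, D (normInf v) ≤ ∑ v ∈ boxF d (u.sup normInf), D (normInf v) :=
        Finset.sum_le_sum_of_subset_of_nonneg hu (fun _ _ _ => hD0 _)
    _ = ∑ m ∈ Finset.range (u.sup normInf + 1), (sph d m : ℝ) * D m := sum_boxF_radial hd D _
    _ ≤ ∑' m, (sph d m : ℝ) * D m :=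
        Summable.sum_le_tsum _ (fun m _ => mul_nonneg (Nat.cast_nonneg _) (hD0 m)) hDs

lemma pow_sub_pow_le_aux (m : ℕ) {b : ℝ} (hb : 0 ≤ b) :
    (b+2)^(m+1) - b^(m+1) ≤ (2*(m:ℝ)+2)*(b+2)^m := by
  induction m with
  | zero => norm_num
  | succ m ih =>
    have h1 : b^(m+1) ≤ (b+2)^(m+1) := pow_le_pow_left₀ hb (by linarith) _
    have h2 : (0:ℝ) ≤ b + 2 := by linarith
    calc (b+2)^(m+1+1) - b^(m+1+1) = (b+2)*((b+2)^(m+1) - b^(m+1)) + 2*b^(m+1) := by ring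
      _ ≤ (b+2)*((2*(m:ℝ)+2)*(b+2)^m) + 2*(b+2)^(m+1) := by
          have := mul_le_mul_of_nonneg_left ih h2
          linarith
      _ = (2*((m:ℝ)+1)+2)*(b+2)^(m+1) := by ring
      _ = (2*((m+1 : ℕ):ℝ)+2)*(b+2)^(m+1) := by push_cast; ring



section Main

variable {d : ℕ} {A : Type*} {X : Set (Config d A)} {f : Config d A → ℝ} {C : ℝ}

/-- The radial majorant. -/
noncomputable def Dfun (X : Set (Config d A)) (f : Config d A → ℝ) (C : ℝ) : ℕ → ℝ :=
  fun m => if m = 0 then 2*C else deltaVar X f (m-1)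

lemma Dfun_nonneg (hne : X.Nonempty) (hC : ∀ x ∈ X, |f x| ≤ C) (hC0 : 0 ≤ C) (m : ℕ) :
    0 ≤ Dfun X f C m := by
  rcases m with - | m
  · simp [Dfun]; linarith
  · simpa [Dfun] using deltaVar_nonneg hne hC

lemma summable_sph_Dfun (hd : 1 ≤ d) (hne : X.Nonempty) (hC : ∀ x ∈ X, |f x| ≤ C) (hC0 : 0 ≤ C)
    (hsum : Summable fun n : ℕ => ((n:ℝ)+1)^(d-1) * deltaVar X f (n+1)) :
    Summable fun m => (sph d m : ℝ) * Dfun X f C m := by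
  obtain ⟨e, rfl⟩ : ∃ e, d = e + 1 := ⟨d-1, by omega⟩
  rw [← summable_nat_add_iff 2]
  have key : ∀ n : ℕ, (sph (e+1) (n+2) : ℝ) * Dfun X f C (n+2)
      ≤ ((2*e+2)*5^e) * (((n:ℝ)+1)^e * deltaVar X f (n+1)) := by
    intro n
    have hδ0 : 0 ≤ deltaVar X f (n+1) := deltaVar_nonneg hne hC
    have hD : Dfun X f C (n+2) = deltaVar X f (n+1) := by simp [Dfun]
    have hle : (2*(n+2)-1)^(e+1) ≤ (2*(n+2)+1)^(e+1) :=
      Nat.pow_le_pow_left (by omega) _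
    have hcast : (sph (e+1) (n+2) : ℝ)
        = ((2*(n+2)+1 : ℕ) : ℝ)^(e+1) - ((2*(n+2)-1 : ℕ) : ℝ)^(e+1) := by
      rw [sph, Nat.cast_sub hle]
      push_cast
      ring
    have hb : ((2*(n+2)-1 : ℕ) : ℝ) = 2*(n:ℝ)+3 := by
      have h9 : 2*(n+2)-1 = 2*n+3 := by omega
      rw [h9]; push_cast; ring
    have hb2 : ((2*(n+2)+1 : ℕ) : ℝ) = (2*(n:ℝ)+3) + 2 := by push_cast; ring
    have hpow := pow_sub_pow_le_aux e (by positivity : (0:ℝ) ≤ 2*(n:ℝ)+3)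
    have h5 : (2*(n:ℝ)+3) + 2 ≤ 5*((n:ℝ)+1) := by push_cast; linarith [Nat.cast_nonneg (α := ℝ) n]
    have hs : (sph (e+1) (n+2) : ℝ) ≤ (2*(e:ℝ)+2) * (5*((n:ℝ)+1))^e := by
      rw [hcast, hb, hb2]
      refine le_trans hpow ?_
      have : ((2*(n:ℝ)+3) + 2)^e ≤ (5*((n:ℝ)+1))^e :=
        pow_le_pow_left₀ (by positivity) h5 _
      have h2e : (0:ℝ) ≤ 2*(e:ℝ)+2 := by positivity
      exact mul_le_mul_of_nonneg_left this h2e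
    rw [hD]
    calc (sph (e+1) (n+2) : ℝ) * deltaVar X f (n+1)
        ≤ ((2*(e:ℝ)+2) * (5*((n:ℝ)+1))^e) * deltaVar X f (n+1) :=
          mul_le_mul_of_nonneg_right hs hδ0
      _ = ((2*e+2)*5^e) * (((n:ℝ)+1)^e * deltaVar X f (n+1)) := by
          rw [mul_pow]; ring
  refine Summable.of_nonneg_of_le (fun n => ?_) key ?_
  · exact mul_nonneg (Nat.cast_nonneg _) (Dfun_nonneg hne hC hC0 _)
  · simpa using hsum.mul_left ((2*(e:ℝ)+2)*5^e)

end Main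



lemma summable_diff {d : ℕ} {A : Type*} {X : Set (Config d A)} {f : Config d A → ℝ} {C : ℝ}
    (hd : 1 ≤ d) (hne : X.Nonempty)
    (hinv : ∀ k : Fin d → ℤ, ∀ x ∈ X, shift k x ∈ X)
    (hC : ∀ x ∈ X, |f x| ≤ C)
    (hsum : Summable fun n : ℕ => ((n:ℝ)+1)^(d-1) * deltaVar X f (n+1))
    {Λ : Finset (Fin d → ℤ)} (hΛ : Λ.Nonempty) {y z : Config d A}
    (hy : y ∈ X) (hz : z ∈ X) (hyz : ∀ k ∉ Λ, y k = z k) :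
    Summable fun k : Fin d → ℤ => f (shift k z) - f (shift k y) := by
  obtain ⟨x₀, hx₀⟩ := hne
  have hne' : X.Nonempty := ⟨x₀, hx₀⟩
  have hC0 : 0 ≤ C := le_trans (abs_nonneg _) (hC _ hx₀)
  have hD0 := Dfun_nonneg hne' hC hC0 (f := f)
  have hrad : Summable fun v : Fin d → ℤ => Dfun X f C (normInf v) :=
    summable_radial hd hD0 (summable_sph_Dfun hd hne' hC hC0 hsum)
  have hmaj : Summable fun k : Fin d → ℤ => ∑ i ∈ Λ, Dfun X f C (normInf (i - k)) := by
    refine summable_sum (fun i _ => ?_)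
    exact hrad.comp_injective (sub_right_injective)
  rw [← summable_abs_iff]
  refine Summable.of_nonneg_of_le (fun k => abs_nonneg _) (fun k => ?_) hmaj
  set m₀ := Λ.inf' hΛ (fun i => normInf (i - k)) with hm₀
  obtain ⟨i₀, hi₀, hval⟩ := Finset.exists_mem_eq_inf' hΛ (fun i => normInf (i - k))
  have step1 : |f (shift k z) - f (shift k y)| ≤ Dfun X f C m₀ := by
    rcases hm : m₀ with - | m
    · have : |f (shift k z) - f (shift k y)| ≤ 2*C := by
        calc |f (shift k z) - f (shift k y)| ≤ |f (shift k z)| + |f (shift k y)| := abs_sub _ _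
          _ ≤ C + C := add_le_add (hC _ (hinv k z hz)) (hC _ (hinv k y hy))
          _ = 2*C := by ring
      simpa [Dfun] using this
    · have hgt : ∀ i ∈ Λ, m < normInf (i - k) := by
        intro i hi
        have h1 : m₀ ≤ normInf (i - k) := hm₀ ▸ Finset.inf'_le _ hi
        omega
      have hagree : ∀ j : Fin d → ℤ, normInf j ≤ m → shift k z j = shift k y j := by
        intro j hj
        show z (j + k) = y (j + k)
        have hnot : j + k ∉ Λ := by
          intro hmem
          have h2 := hgt _ hmem
          have h3 : (j + k) - k = j := by abel
          rw [h3] at h2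
          omega
        exact (hyz _ hnot).symm
      have := abs_sub_le_deltaVar hC (hinv k z hz) (hinv k y hy) hagree
      simpa [Dfun] using this
  refine le_trans step1 ?_
  rw [hm₀, hval]
  exact Finset.single_le_sum (f := fun i => Dfun X f C (normInf (i - k))) (fun i _ => hD0 _) hi₀

lemma tendsto_fnSum_diff {d : ℕ} {A : Type*} {X : Set (Config d A)} {f : Config d A → ℝ} {C : ℝ}
    (hd : 1 ≤ d) (hne : X.Nonempty)
    (hinv : ∀ k : Fin d → ℤ, ∀ x ∈ X, shift k x ∈ X)
    (hC : ∀ x ∈ X, |f x| ≤ C)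
    (hsum : Summable fun n : ℕ => ((n:ℝ)+1)^(d-1) * deltaVar X f (n+1))
    {Λ : Finset (Fin d → ℤ)} (hΛ : Λ.Nonempty) {y z : Config d A}
    (hy : y ∈ X) (hz : z ∈ X) (hyz : ∀ k ∉ Λ, y k = z k) :
    Filter.Tendsto (fun n => fnSum d f n z - fnSum d f n y) Filter.atTop (nhds (phiF f y z)) := by
  have hg := summable_diff hd hne hinv hC hsum hΛ hy hz hyz
  have h1 : Filter.Tendsto (boxF d) Filter.atTop Filter.atTop :=
    Filter.tendsto_atTop_finset_of_monotone boxF_mono (fun k => ⟨normInf k, mem_boxF.2 le_rfl⟩)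
  have h2 := hg.hasSum.comp h1
  have h3 : ∀ n, fnSum d f n z - fnSum d f n y
      = ∑ k ∈ boxF d n, (f (shift k z) - f (shift k y)) := by
    intro n
    rw [fnSum, fnSum, Finset.sum_sub_distrib]
  rw [phiF]
  simpa [h3, Function.comp_def] using h2


set_option maxHeartbeats 1000000 in
/-- For `f ∈ SV_d(X)`, a nonempty finite `Λ`, `ω ∈ 𝒜^Λ` and `x ∈ X`,
the limit of `e^{f_n(ω x_{Λ^c})} 1{ω x_{Λ^c} ∈ X} / Σ_η e^{f_n(η x_{Λ^c})} 1{η x_{Λ^c} ∈ X}`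
exists and is a nonnegative real number; it is `0` when `ω x_{Λ^c} ∉ X`, and equals
`1 / Σ_η e^{φ_f(ω x_{Λ^c}, η x_{Λ^c})} 1{η x_{Λ^c} ∈ X} > 0` when `ω x_{Λ^c} ∈ X`. -/
theorem gamma_limit_exists {d : ℕ} (hd : 1 ≤ d) {A : Type*} [Fintype A] [Nonempty A]
    [TopologicalSpace A] [DiscreteTopology A]
    (X : Set (Config d A)) (hne : X.Nonempty) (hcl : IsClosed X)
    (hinv : ∀ k : Fin d → ℤ, ∀ x ∈ X, shift k x ∈ X)
    (f : Config d A → ℝ) (hf : MemSV d X f)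
    (Λ : Finset (Fin d → ℤ)) (hΛ : Λ.Nonempty)
    (ω : {k // k ∈ Λ} → A) (x : Config d A) (hx : x ∈ X) :
    ∃ L : ℝ, 0 ≤ L ∧
      Tendsto (fun n : ℕ =>
          X.indicator (fun z => Real.exp (fnSum d f n z)) (patch Λ ω x) /
            ∑ η : {k // k ∈ Λ} → A,
              X.indicator (fun z => Real.exp (fnSum d f n z)) (patch Λ η x))
        atTop (nhds L) ∧
      (patch Λ ω x ∉ X → L = 0) ∧
      (patch Λ ω x ∈ X →
        L = 1 / (∑ η : {k // k ∈ Λ} → A,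
            X.indicator (fun z => Real.exp (phiF f (patch Λ ω x) z)) (patch Λ η x)) ∧
        0 < L) := by
  obtain ⟨⟨C, hC⟩, hsum⟩ := hf
  by_cases hωX : patch Λ ω x ∈ X
  · have hpatch : ∀ η : {k // k ∈ Λ} → A, ∀ k, k ∉ Λ → patch Λ ω x k = patch Λ η x k := by
      intro η k hk
      simp [patch, hk]
    obtain ⟨S, hS⟩ : ∃ S : ℝ, S = ∑ η : {k // k ∈ Λ} → A,
        X.indicator (fun z => Real.exp (phiF f (patch Λ ω x) z)) (patch Λ η x) := ⟨_, rfl⟩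
    have hterm : ∀ η : {k // k ∈ Λ} → A,
        Tendsto (fun n => X.indicator (fun z => Real.exp (fnSum d f n z)) (patch Λ η x)
            / Real.exp (fnSum d f n (patch Λ ω x))) atTop
          (nhds (X.indicator (fun z => Real.exp (phiF f (patch Λ ω x) z)) (patch Λ η x))) := by
      intro η
      by_cases hηX : patch Λ η x ∈ X
      · have h1 := tendsto_fnSum_diff hd hne hinv hC hsum hΛ hωX hηX
          (fun k hk => hpatch η k hk)
        have h2 := (Real.continuous_exp.tendsto _).comp h1
        rw [Set.indicator_of_mem hηX]
        have heq : ∀ n : ℕ,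
            X.indicator (fun z => Real.exp (fnSum d f n z)) (patch Λ η x)
                / Real.exp (fnSum d f n (patch Λ ω x))
              = Real.exp (fnSum d f n (patch Λ η x) - fnSum d f n (patch Λ ω x)) := by
          intro n
          rw [Set.indicator_of_mem hηX, Real.exp_sub]
        simp only [heq]
        exact h2
      · simp only [Set.indicator_of_notMem hηX]
        simpa using tendsto_const_nhds (α := ℝ) (f := atTop (α := ℕ))
    have hsumT : Tendsto (fun n => ∑ η : {k // k ∈ Λ} → A,
        X.indicator (fun z => Real.exp (fnSum d f n z)) (patch Λ η x)
          / Real.exp (fnSum d f n (patch Λ ω x))) atTop (nhds S) := by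
      rw [hS]
      exact tendsto_finset_sum _ (fun η _ => hterm η)
    have hself : X.indicator (fun z => Real.exp (phiF f (patch Λ ω x) z)) (patch Λ ω x) = 1 := by
      rw [Set.indicator_of_mem hωX]
      have h0 : phiF f (patch Λ ω x) (patch Λ ω x) = 0 := by simp [phiF]
      rw [h0, Real.exp_zero]
    have hS1 : (1:ℝ) ≤ S := by
      rw [hS, ← hself]
      exact Finset.single_le_sum
        (f := fun η : {k // k ∈ Λ} → A =>
          X.indicator (fun z => Real.exp (phiF f (patch Λ ω x) z)) (patch Λ η x))
        (fun η _ => Set.indicator_nonneg (fun z _ => (Real.exp_pos _).le) _) (Finset.mem_univ ω)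
    have hSpos : 0 < S := lt_of_lt_of_le one_pos hS1
    refine ⟨S⁻¹, inv_nonneg.2 hSpos.le, ?_, fun h => absurd hωX h, fun _ => ⟨by rw [hS, one_div], inv_pos.2 hSpos⟩⟩
    have heq2 : ∀ n : ℕ,
        X.indicator (fun z => Real.exp (fnSum d f n z)) (patch Λ ω x) /
            ∑ η : {k // k ∈ Λ} → A,
              X.indicator (fun z => Real.exp (fnSum d f n z)) (patch Λ η x)
          = (∑ η : {k // k ∈ Λ} → A,
              X.indicator (fun z => Real.exp (fnSum d f n z)) (patch Λ η x)
                / Real.exp (fnSum d f n (patch Λ ω x)))⁻¹ := by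
      intro n
      rw [← Finset.sum_div, inv_div, Set.indicator_of_mem hωX]
    simp only [heq2]
    exact hsumT.inv₀ (ne_of_gt hSpos)
  · refine ⟨0, le_rfl, ?_, fun _ => rfl, fun h => absurd h hωX⟩
    have hz : ∀ n : ℕ, X.indicator (fun z => Real.exp (fnSum d f n z)) (patch Λ ω x) = 0 :=
      fun n => Set.indicator_of_notMem hωX _
    simp only [hz, zero_div]
    exact tendsto_const_nhds
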